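/- Let F : C → D be a full functor between regular categories such that F preserves and reflects covers. If an object Q of C has the property that for every cover p : F(A) → X in D with X covering F(Q) via q : X → F(Q), the composite qp is in the image of F, and every object of D is covered by one in the image of F, then F(Q) is projective in D whenever Q is projective in C. -/

import Mathlib

open CategoryTheory CategoryTheory.Limits

universe v u v₂ u₂

/-- A morphism is a cover if the only subobject of its codomain through which
it factors is the maximal one. -/
def IsCover {C : Type u} [Category.{v} C] {X Y : C} (f : Y ⟶ X) : Prop :=
  ∀ ⦃Z : C⦄ (m : Z ⟶ X) (g : Y ⟶ Z), Mono m → g ≫ m = f → IsIso m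

/-- An object is projective (w.r.t. covers) if every cover onto it splits. -/
def CovProjective {C : Type u} [Category.{v} C] (P : C) : Prop :=
  ∀ ⦃X : C⦄ (q : X ⟶ P), IsCover q → ∃ s : P ⟶ X, s ≫ q = 𝟙 P

/-- A category has enough projectives if every object is covered by a projective. -/
def HasEnoughCovProjectives (C : Type u) [Category.{v} C] : Prop :=
  ∀ X : C, ∃ (P : C) (q : P ⟶ X), CovProjective P ∧ IsCover q

/-- A regular category: finite limits, cover-mono factorizations,
and covers stable under pullback. -/
class RegularCat (C : Type u) [Category.{v} C] extends HasFiniteLimits C : Prop where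
  factor : ∀ {X Y : C} (f : X ⟶ Y), ∃ (Z : C) (e : X ⟶ Z) (m : Z ⟶ Y),
    IsCover e ∧ Mono m ∧ e ≫ m = f
  pullback_cover : ∀ {X Y Z L : C} (f : X ⟶ Y) (g : Z ⟶ Y)
    (p₁ : L ⟶ X) (p₂ : L ⟶ Z), IsPullback p₁ p₂ f g → IsCover f → IsCover p₂
lemma IsCover.comp {C : Type u} [Category.{v} C] [HasPullbacks C]
    {A B X : C} {f : A ⟶ B} {g : B ⟶ X}
    (hf : IsCover f) (hg : IsCover g) : IsCover (f ≫ g) := by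
  intro Z m h hm hcomm
  haveI := hm
  have hfst : Mono (pullback.fst g m) := inferInstance
  have hiso : IsIso (pullback.fst g m) :=
    hf _ (pullback.lift f h (by rw [hcomm])) hfst (pullback.lift_fst _ _ _)
  exact hg m (inv (pullback.fst g m) ≫ pullback.snd g m) hm
    (by rw [Category.assoc, ← pullback.condition, IsIso.inv_hom_id_assoc])

/-- If F is full, preserves and reflects covers, is covering, and for the
object Q every composite of covers F(A) → X → F(Q) is in the image of F,
then F sends the projective Q to a projective object. -/
theorem image_of_projective_is_projective
    {C : Type u} [Category.{v} C] {D : Type u₂} [Category.{v₂} D]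
    [RegularCat C] [RegularCat D] (F : C ⥤ D) [F.Full]
    (hpres : ∀ {X Y : C} (f : Y ⟶ X), IsCover f → IsCover (F.map f))
    (hrefl : ∀ {X Y : C} (f : Y ⟶ X), IsCover (F.map f) → IsCover f)
    (Q : C)
    (hlift : ∀ {A : C} {X : D} (p : F.obj A ⟶ X) (q : X ⟶ F.obj Q),
      IsCover p → IsCover q → ∃ h : A ⟶ Q, F.map h = p ≫ q)
    (hcovering : ∀ Z : D, ∃ (A : C) (c : F.obj A ⟶ Z), IsCover c)
    (hQ : CovProjective Q) : CovProjective (F.obj Q) := by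
  intro X q hq
  obtain ⟨A, c, hc⟩ := hcovering X
  obtain ⟨h, hh⟩ := hlift c q hc hq
  have hcover : IsCover h := hrefl h (by rw [hh]; exact hc.comp hq)
  obtain ⟨s, hs⟩ := hQ h hcover
  refine ⟨F.map s ≫ c, ?_⟩
  rw [Category.assoc, ← hh, ← F.map_comp, hs, F.map_id]
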